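/- If ε-nets of sizes N_D and N_A exist for the unit Frobenius ball 𝒟 of s×r matrices (Frobenius distance) and the Stiefel-type set 𝒜 of q×r orthonormal-column matrices (distance d(A1,A2)=‖A1A1^T−A2A2^T‖_op), respectively, then the set Γ of s×q matrices of rank ≤ r and Frobenius norm ≤ 1 admits a 2ε-net of size at most N_D · N_A in Frobenius distance. -/

import Mathlib

open scoped BigOperators
open Matrix

/-- Frobenius norm of a real matrix. -/
noncomputable def frob {a b : ℕ} (M : Matrix (Fin a) (Fin b) ℝ) : ℝ :=
  Real.sqrt (∑ i, ∑ j, (M i j) ^ 2)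

/-- Euclidean norm of the `j`-th row of a matrix. -/
noncomputable def rnorm {a b : ℕ} (M : Matrix (Fin a) (Fin b) ℝ) (j : Fin a) : ℝ :=
  Real.sqrt (∑ k, (M j k) ^ 2)

/-- Operator (spectral) norm of a real matrix: the largest singular value. -/
noncomputable def opN {a b : ℕ} (M : Matrix (Fin a) (Fin b) ℝ) : ℝ :=
  sSup {c : ℝ | ∃ v : Fin b → ℝ, (∑ j, (v j) ^ 2) ≤ 1 ∧
    c = Real.sqrt (∑ i, (M.mulVec v i) ^ 2)}

/- ### Auxiliary lemmas -/

section Aux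

open Module

noncomputable def vecM {a b : ℕ} (M : Matrix (Fin a) (Fin b) ℝ) :
    EuclideanSpace ℝ (Fin a × Fin b) :=
  (EuclideanSpace.equiv (Fin a × Fin b) ℝ).symm (fun p => M p.1 p.2)

lemma frob_eq_norm {a b : ℕ} (M : Matrix (Fin a) (Fin b) ℝ) :
    frob M = ‖vecM M‖ := by
  rw [EuclideanSpace.norm_eq, frob]
  congr 1
  rw [Fintype.sum_prod_type]
  simp [vecM, sq_abs]

lemma frob_nonneg {a b : ℕ} (M : Matrix (Fin a) (Fin b) ℝ) : 0 ≤ frob M :=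
  Real.sqrt_nonneg _

lemma frob_sq {a b : ℕ} (M : Matrix (Fin a) (Fin b) ℝ) :
    frob M ^ 2 = ∑ i, ∑ j, (M i j) ^ 2 := by
  rw [frob, Real.sq_sqrt]; positivity

lemma frob_le_iff {a b : ℕ} (M : Matrix (Fin a) (Fin b) ℝ) {c : ℝ} (hc : 0 ≤ c) :
    frob M ≤ c ↔ ∑ i, ∑ j, (M i j) ^ 2 ≤ c ^ 2 := by
  rw [frob]
  constructor
  · intro h
    calc ∑ i, ∑ j, (M i j)^2 = Real.sqrt (∑ i, ∑ j, (M i j)^2) ^ 2 := by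
          rw [Real.sq_sqrt]; positivity
      _ ≤ c ^ 2 := by apply pow_le_pow_left₀ (Real.sqrt_nonneg _) h
  · intro h
    calc Real.sqrt (∑ i, ∑ j, (M i j)^2) ≤ Real.sqrt (c^2) := Real.sqrt_le_sqrt h
      _ = c := Real.sqrt_sq hc

lemma frob_triangle {a b : ℕ} (X Y Z : Matrix (Fin a) (Fin b) ℝ) :
    frob (X - Z) ≤ frob (X - Y) + frob (Y - Z) := by
  rw [frob_eq_norm, frob_eq_norm, frob_eq_norm]
  have : vecM (X - Z) = vecM (X - Y) + vecM (Y - Z) := by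
    ext p; simp [vecM, Matrix.sub_apply]; try ring
  rw [this]
  exact norm_add_le _ _

lemma sumsq_eq_trace {a b : ℕ} (M : Matrix (Fin a) (Fin b) ℝ) :
    ∑ i, ∑ j, (M i j) ^ 2 = Matrix.trace (M * Mᵀ) := by
  simp [Matrix.trace, Matrix.mul_apply, Matrix.diag, sq]

lemma frob_mul_orth {a b c : ℕ} (D : Matrix (Fin a) (Fin b) ℝ)
    (A : Matrix (Fin c) (Fin b) ℝ) (hA : Aᵀ * A = 1) :
    frob (D * Aᵀ) = frob D := by
  unfold frob
  congr 1
  rw [sumsq_eq_trace, sumsq_eq_trace]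
  have : D * Aᵀ * (D * Aᵀ)ᵀ = D * Dᵀ := by
    rw [Matrix.transpose_mul, Matrix.transpose_transpose,
      Matrix.mul_assoc, ← Matrix.mul_assoc Aᵀ A Dᵀ, hA, Matrix.one_mul]
  rw [this]

lemma frob_mulA_le {a b c : ℕ} (C : Matrix (Fin a) (Fin c) ℝ)
    (A : Matrix (Fin c) (Fin b) ℝ) (hA : Aᵀ * A = 1) :
    frob (C * A) ≤ frob C := by
  have key : ∑ i, ∑ j, ((C * A) i j) ^ 2 ≤ ∑ i, ∑ j, (C i j) ^ 2 := by
    rw [sumsq_eq_trace, sumsq_eq_trace]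
    have hPP : (A * Aᵀ) * (A * Aᵀ) = A * Aᵀ := by
      rw [Matrix.mul_assoc, ← Matrix.mul_assoc Aᵀ A Aᵀ, hA, Matrix.one_mul]
    have hP : (1 - A * Aᵀ) * (1 - A * Aᵀ) = 1 - A * Aᵀ := by
      rw [Matrix.mul_sub, Matrix.sub_mul, Matrix.sub_mul, Matrix.one_mul, Matrix.mul_one, hPP]
      simp only [Matrix.one_mul]
      abel
    have hPt : (1 - A * Aᵀ)ᵀ = 1 - A * Aᵀ := by
      rw [Matrix.transpose_sub, Matrix.transpose_one, Matrix.transpose_mul,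
        Matrix.transpose_transpose]
    have hCA : (C * A) * (C * A)ᵀ = C * (A * Aᵀ) * Cᵀ := by
      rw [Matrix.transpose_mul]
      rw [Matrix.mul_assoc, Matrix.mul_assoc, Matrix.mul_assoc]
    have hdiff : Matrix.trace (C * Cᵀ) - Matrix.trace ((C * A) * (C * A)ᵀ)
        = Matrix.trace ((C * (1 - A * Aᵀ)) * (C * (1 - A * Aᵀ))ᵀ) := by
      rw [hCA, Matrix.transpose_mul, hPt, ← Matrix.trace_sub]
      congr 1
      rw [Matrix.mul_assoc C (1 - A * Aᵀ) _, ← Matrix.mul_assoc (1 - A * Aᵀ) (1 - A * Aᵀ) Cᵀ,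
        hP, Matrix.sub_mul, Matrix.one_mul, Matrix.mul_sub, Matrix.mul_assoc]
    have hnn : 0 ≤ Matrix.trace ((C * (1 - A * Aᵀ)) * (C * (1 - A * Aᵀ))ᵀ) := by
      rw [← sumsq_eq_trace]; positivity
    linarith
  unfold frob
  exact Real.sqrt_le_sqrt key

lemma opN_bddAbove {a b : ℕ} (M : Matrix (Fin a) (Fin b) ℝ) :
    BddAbove {c : ℝ | ∃ v : Fin b → ℝ, (∑ j, (v j) ^ 2) ≤ 1 ∧
      c = Real.sqrt (∑ i, (M.mulVec v i) ^ 2)} := by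
  refine ⟨frob M, ?_⟩
  rintro c ⟨v, hv, rfl⟩
  rw [frob]
  apply Real.sqrt_le_sqrt
  apply Finset.sum_le_sum
  intro i _
  calc (M.mulVec v i) ^ 2 = (∑ j, M i j * v j) ^ 2 := by
        simp [Matrix.mulVec, dotProduct]
    _ ≤ (∑ j, (M i j) ^ 2) * (∑ j, (v j) ^ 2) := Finset.sum_mul_sq_le_sq_mul_sq _ _ _
    _ ≤ (∑ j, (M i j) ^ 2) * 1 := by
        apply mul_le_mul_of_nonneg_left hv; positivity
    _ = ∑ j, (M i j) ^ 2 := mul_one _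

lemma le_opN {a b : ℕ} (M : Matrix (Fin a) (Fin b) ℝ) (v : Fin b → ℝ)
    (hv : (∑ j, (v j) ^ 2) ≤ 1) :
    Real.sqrt (∑ i, (M.mulVec v i) ^ 2) ≤ opN M :=
  le_csSup (opN_bddAbove M) ⟨v, hv, rfl⟩

lemma opN_nonneg {a b : ℕ} (M : Matrix (Fin a) (Fin b) ℝ) : 0 ≤ opN M := by
  have := le_opN M 0 (by simp)
  simp [Matrix.mulVec_zero] at this
  exact le_trans (by positivity) this

lemma mulVec_sq_le {a b : ℕ} (M : Matrix (Fin a) (Fin b) ℝ) (v : Fin b → ℝ) :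
    ∑ i, (M.mulVec v i) ^ 2 ≤ (opN M) ^ 2 * ∑ j, (v j) ^ 2 := by
  by_cases hv : v = 0
  · simp [hv, Matrix.mulVec_zero]
  have hpos : 0 < ∑ j, (v j) ^ 2 := by
    rcases Function.ne_iff.mp hv with ⟨j, hj⟩
    apply Finset.sum_pos' (fun j _ => sq_nonneg _)
    exact ⟨j, Finset.mem_univ j,
      lt_of_le_of_ne (sq_nonneg _) (Ne.symm (pow_ne_zero 2 hj))⟩
  set n : ℝ := Real.sqrt (∑ j, (v j) ^ 2) with hn
  have hnpos : 0 < n := Real.sqrt_pos.mpr hpos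
  have hn2 : n ^ 2 = ∑ j, (v j) ^ 2 := Real.sq_sqrt hpos.le
  set u : Fin b → ℝ := n⁻¹ • v with hu
  have hu1 : (∑ j, (u j) ^ 2) ≤ 1 := by
    simp only [hu, Pi.smul_apply, smul_eq_mul, mul_pow, ← Finset.mul_sum]
    rw [← hn2]
    field_simp
    exact le_rfl
  have h1 : Real.sqrt (∑ i, (M.mulVec u i) ^ 2) ≤ opN M := le_opN M u hu1
  have h2 : ∑ i, (M.mulVec u i) ^ 2 ≤ (opN M) ^ 2 := by
    have := pow_le_pow_left₀ (Real.sqrt_nonneg _) h1 2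
    rwa [Real.sq_sqrt (by positivity)] at this
  have hMv : ∀ i, M.mulVec v i = n * M.mulVec u i := by
    intro i
    have : v = n • u := by
      rw [hu, smul_smul, mul_inv_cancel₀ hnpos.ne', one_smul]
    rw [this, Matrix.mulVec_smul]
    simp
  calc ∑ i, (M.mulVec v i) ^ 2 = n ^ 2 * ∑ i, (M.mulVec u i) ^ 2 := by
        simp_rw [hMv]; rw [Finset.mul_sum]; congr 1; funext i; ring
    _ ≤ n ^ 2 * (opN M) ^ 2 := by apply mul_le_mul_of_nonneg_left h2 (by positivity)
    _ = (opN M) ^ 2 * ∑ j, (v j) ^ 2 := by rw [hn2]; ring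

lemma frob_mul_le {a c : ℕ} (C : Matrix (Fin a) (Fin c) ℝ)
    (M : Matrix (Fin c) (Fin c) ℝ) (hM : Mᵀ = M) :
    frob (C * M) ≤ opN M * frob C := by
  have hkey : ∑ i, ∑ j, ((C * M) i j) ^ 2 ≤ (opN M) ^ 2 * ∑ i, ∑ j, (C i j) ^ 2 := by
    rw [Finset.mul_sum]
    apply Finset.sum_le_sum
    intro i _
    have hsym : ∀ p p', M p p' = M p' p := by
      intro p p'
      conv_lhs => rw [← hM]
      rfl
    have hrow : ∀ j, (C * M) i j = M.mulVec (C i) j := by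
      intro j
      simp only [Matrix.mul_apply, Matrix.mulVec, dotProduct]
      apply Finset.sum_congr rfl
      intro k _
      rw [hsym k j]
      ring
    simp_rw [hrow]
    exact mulVec_sq_le M (C i)
  rw [frob, frob]
  calc Real.sqrt (∑ i, ∑ j, ((C * M) i j) ^ 2)
      ≤ Real.sqrt ((opN M) ^ 2 * ∑ i, ∑ j, (C i j) ^ 2) := Real.sqrt_le_sqrt hkey
    _ = opN M * Real.sqrt (∑ i, ∑ j, (C i j) ^ 2) := by
        rw [Real.sqrt_mul (by positivity), Real.sqrt_sq (opN_nonneg M)]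

lemma exists_interm {E : Type*} [NormedAddCommGroup E] [InnerProductSpace ℝ E]
    [FiniteDimensional ℝ E] :
    ∀ (n : ℕ) (V : Submodule ℝ E), finrank ℝ V ≤ n → n ≤ finrank ℝ E →
      ∃ W : Submodule ℝ E, V ≤ W ∧ finrank ℝ W = n := by
  intro n
  induction n with
  | zero => intro V h _; exact ⟨V, le_rfl, Nat.le_zero.mp h⟩
  | succ n ih =>
    intro V h hn
    by_cases hV : finrank ℝ V = n + 1
    · exact ⟨V, le_rfl, hV⟩
    · have h' : finrank ℝ V ≤ n := by omega
      obtain ⟨W', hVW', hW'⟩ := ih V h' (by omega)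
      have hlt : finrank ℝ W' < finrank ℝ E := by
        rw [hW']; omega
      obtain ⟨m, hm⟩ := Submodule.exists_of_finrank_lt W' hlt
      have hmnot : m ∉ W' := by
        have := hm 1 one_ne_zero; simpa using this
      refine ⟨W' ⊔ Submodule.span ℝ {m}, le_trans hVW' le_sup_left, ?_⟩
      have hm0 : m ≠ 0 := fun h0 => hmnot (h0 ▸ W'.zero_mem)
      have hinf : W' ⊓ Submodule.span ℝ {m} = ⊥ := by
        rw [Submodule.eq_bot_iff]
        rintro x ⟨hx1, hx2⟩
        obtain ⟨c, rfl⟩ := Submodule.mem_span_singleton.mp hx2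
        by_contra hne
        have hc : c ≠ 0 := fun h0 => hne (by simp [h0])
        exact hm c hc hx1
      have := Submodule.finrank_sup_add_finrank_inf_eq W' (Submodule.span ℝ {m})
      rw [hinf, finrank_bot, finrank_span_singleton hm0, hW'] at this
      omega

lemma exists_orth_factor {s q r : ℕ} (hrq : r ≤ q) (C : Matrix (Fin s) (Fin q) ℝ)
    (h : C.rank ≤ r) :
    ∃ A : Matrix (Fin q) (Fin r) ℝ, Aᵀ * A = 1 ∧ C * (A * Aᵀ) = C := by
  classical
  set E := EuclideanSpace ℝ (Fin q)
  set V : Submodule ℝ E := Submodule.span ℝ (Set.range fun i => (WithLp.toLp 2 (C i) : E)) with hV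
  have hVfin : finrank ℝ V ≤ r := by
    have h1 : C.rank = finrank ℝ (Submodule.span ℝ (Set.range C)) :=
      Matrix.rank_eq_finrank_span_row C
    have h2 : finrank ℝ V = finrank ℝ (Submodule.span ℝ (Set.range C)) := by
      have key := LinearEquiv.finrank_map_eq (WithLp.linearEquiv 2 ℝ (Fin q → ℝ)).symm
        (Submodule.span ℝ (Set.range (Matrix.of.symm C)))
      rw [Submodule.map_span, ← Set.range_comp] at key
      exact key
    omega
  have hE : finrank ℝ E = q := by simp [E, finrank_euclideanSpace]
  obtain ⟨W, hVW, hW⟩ := exists_interm r V hVfin (by omega)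
  let b0 := stdOrthonormalBasis ℝ W
  let b : OrthonormalBasis (Fin r) ℝ W := b0.reindex (finCongr (by rw [hW]))
  set A : Matrix (Fin q) (Fin r) ℝ := fun j k => ((b k : E) j) with hA
  have hinner : ∀ k k', (inner ℝ ((b k : E)) ((b k' : E)) : ℝ)
      = if k = k' then 1 else 0 := by
    intro k k'
    have := b.orthonormal
    rw [orthonormal_iff_ite] at this
    have h' := this k k'
    rwa [Submodule.coe_inner] at h'
  have hAA : Aᵀ * A = 1 := by
    ext k k'
    simp only [Matrix.mul_apply, Matrix.transpose_apply, Matrix.one_apply]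
    have := hinner k k'
    rw [PiLp.inner_apply] at this
    simpa [hA, RCLike.inner_apply, conj_trivial, mul_comm] using this
  refine ⟨A, hAA, ?_⟩
  have hrow : ∀ i, (WithLp.toLp 2 (C i) : E) ∈ W :=
    fun i => hVW (Submodule.subset_span ⟨i, rfl⟩)
  have hproj : ∀ (x : E), x ∈ W → ∀ j, x j = ∑ k, (inner ℝ ((b k : E)) x : ℝ) * (b k : E) j := by
    intro x hx j
    have hsum := b.sum_repr ⟨x, hx⟩
    have hcoord : ∀ k, b.repr ⟨x, hx⟩ k = (inner ℝ ((b k : E)) x : ℝ) := by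
      intro k
      have hci : (inner ℝ ((b k : E)) x : ℝ) = (inner ℝ (b k) (⟨x, hx⟩ : W) : ℝ) :=
        (Submodule.coe_inner W (b k) ⟨x, hx⟩).symm
      rw [hci, b.repr_apply_apply]
    calc x j = ((∑ k, b.repr ⟨x, hx⟩ k • b k : W) : E) j := by rw [hsum]
      _ = ∑ k, b.repr ⟨x, hx⟩ k * (b k : E) j := by
          rw [AddSubmonoidClass.coe_finset_sum]
          simp only [Submodule.coe_smul]
          rw [show (∑ k, b.repr ⟨x, hx⟩ k • ((b k : E))) j
              = ∑ k, (b.repr ⟨x, hx⟩ k • ((b k : E))) j from by rw [WithLp.ofLp_sum, Finset.sum_apply]]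
          rfl
      _ = ∑ k, (inner ℝ ((b k : E)) x : ℝ) * (b k : E) j := by
          simp_rw [hcoord]
  ext i j
  have hx := hproj (WithLp.toLp 2 (C i)) (hrow i) j
  simp only [Matrix.mul_apply]
  calc (∑ l, C i l * (A * Aᵀ) l j)
      = ∑ l, C i l * ∑ k, A l k * A j k := by
        apply Finset.sum_congr rfl; intro l _
        simp [Matrix.mul_apply, Matrix.transpose_apply]
    _ = ∑ k, (∑ l, C i l * A l k) * A j k := by
        simp_rw [Finset.mul_sum]
        rw [Finset.sum_comm]
        simp_rw [Finset.sum_mul]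
        apply Finset.sum_congr rfl; intro k _
        apply Finset.sum_congr rfl; intro l _
        ring
    _ = ∑ k, (inner ℝ ((b k : E)) (WithLp.toLp 2 (C i) : E) : ℝ) * (b k : E) j := by
        apply Finset.sum_congr rfl; intro k _
        congr 1
    _ = C i j := hx.symm

end Aux

theorem stmt17 {s q r : ℕ} (hrq : r ≤ q) (ε : ℝ) (hε : 0 < ε)
    (ND : Finset (Matrix (Fin s) (Fin r) ℝ))
    (NA : Finset (Matrix (Fin q) (Fin r) ℝ))
    (hNDsub : ∀ D ∈ ND, frob D ≤ 1)
    (hNAsub : ∀ A ∈ NA, Aᵀ * A = 1)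
    (hND : ∀ D : Matrix (Fin s) (Fin r) ℝ, frob D ≤ 1 →
      ∃ D' ∈ ND, frob (D - D') ≤ ε)
    (hNA : ∀ A : Matrix (Fin q) (Fin r) ℝ, Aᵀ * A = 1 →
      ∃ A' ∈ NA, opN (A * Aᵀ - A' * A'ᵀ) ≤ ε) :
    ∃ N : Finset (Matrix (Fin s) (Fin q) ℝ),
      N.card ≤ ND.card * NA.card ∧
      (∀ Cm ∈ N, Cm.rank ≤ r ∧ frob Cm ≤ 1) ∧
      ∀ Cm : Matrix (Fin s) (Fin q) ℝ, Cm.rank ≤ r → frob Cm ≤ 1 →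
        ∃ C' ∈ N, frob (Cm - C') ≤ 2 * ε := by
  classical
  refine ⟨(ND ×ˢ NA).image (fun p => p.1 * p.2ᵀ), ?_, ?_, ?_⟩
  · calc ((ND ×ˢ NA).image (fun p => p.1 * p.2ᵀ)).card ≤ (ND ×ˢ NA).card :=
        Finset.card_image_le
      _ = ND.card * NA.card := Finset.card_product _ _
  · intro Cm hCm
    obtain ⟨⟨D', A'⟩, hp, rfl⟩ := Finset.mem_image.mp hCm
    obtain ⟨hD', hA'⟩ := Finset.mem_product.mp hp
    constructor
    · calc (D' * A'ᵀ).rank ≤ D'.rank := Matrix.rank_mul_le_left _ _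
        _ ≤ r := Matrix.rank_le_width D'
    · rw [frob_mul_orth D' A' (hNAsub A' hA')]
      exact hNDsub D' hD'
  · intro Cm hrank hfrob
    obtain ⟨A, hAA, hCA⟩ := exists_orth_factor hrq Cm hrank
    obtain ⟨A', hA'mem, hA'⟩ := hNA A hAA
    have hA'orth : A'ᵀ * A' = 1 := hNAsub A' hA'mem
    set D₂ : Matrix (Fin s) (Fin r) ℝ := Cm * A' with hD₂
    have hD₂frob : frob D₂ ≤ 1 := le_trans (frob_mulA_le Cm A' hA'orth) hfrob
    obtain ⟨D', hD'mem, hD'⟩ := hND D₂ hD₂frob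
    refine ⟨D' * A'ᵀ, Finset.mem_image.mpr ⟨⟨D', A'⟩, Finset.mem_product.mpr ⟨hD'mem, hA'mem⟩,
      rfl⟩, ?_⟩
    have h1 : frob (Cm - Cm * (A' * A'ᵀ)) ≤ ε := by
      have heq : Cm - Cm * (A' * A'ᵀ) = Cm * (A * Aᵀ - A' * A'ᵀ) := by
        rw [Matrix.mul_sub, hCA]
      rw [heq]
      have hsymm : (A * Aᵀ - A' * A'ᵀ)ᵀ = A * Aᵀ - A' * A'ᵀ := by
        rw [Matrix.transpose_sub, Matrix.transpose_mul, Matrix.transpose_mul,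
          Matrix.transpose_transpose, Matrix.transpose_transpose]
      calc frob (Cm * (A * Aᵀ - A' * A'ᵀ)) ≤ opN (A * Aᵀ - A' * A'ᵀ) * frob Cm :=
            frob_mul_le Cm _ hsymm
        _ ≤ ε * 1 := by
            apply mul_le_mul hA' hfrob (frob_nonneg Cm) hε.le
        _ = ε := mul_one ε
    have h2 : frob (Cm * (A' * A'ᵀ) - D' * A'ᵀ) ≤ ε := by
      have heq : Cm * (A' * A'ᵀ) - D' * A'ᵀ = (D₂ - D') * A'ᵀ := by
        rw [hD₂, Matrix.sub_mul, Matrix.mul_assoc]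
      rw [heq, frob_mul_orth _ A' hA'orth]
      exact hD'
    calc frob (Cm - D' * A'ᵀ)
        ≤ frob (Cm - Cm * (A' * A'ᵀ)) + frob (Cm * (A' * A'ᵀ) - D' * A'ᵀ) :=
          frob_triangle _ _ _
      _ ≤ ε + ε := add_le_add h1 h2
      _ = 2 * ε := by ring
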